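/- Let S be an infinite set and n ≥ 2 a natural number. Then CC_n(2^S) is not a co-Esakia space: there exists a clopen subset 𝒱 of CC_n(2^S) whose ⊴-upset ⇑𝒱 = {C ∈ CC_n(2^S) | ∃ K ∈ 𝒱, K ⊴ C} is not clopen in CC_n(2^S). -/

import Mathlib

open Set TopologicalSpace

/-- The set of nonempty closed chains of a Priestley space `X`. -/
def CC (X : Type*) [TopologicalSpace X] [Preorder X] : Set (Set X) :=
  {C | C.Nonempty ∧ IsClosed C ∧ IsChain (· ≤ ·) C}

variable {X : Type*} [TopologicalSpace X] [Preorder X]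

/-- `□A = {C ∈ CC(X) | C ⊆ A}`. -/
def ccBox (A : Set X) : Set ↥(CC X) := {C | (C : Set X) ⊆ A}

/-- `◇A = {C ∈ CC(X) | C ∩ A ≠ ∅}`. -/
def ccDia (A : Set X) : Set ↥(CC X) := {C | ((C : Set X) ∩ A).Nonempty}

/-- The Vietoris topology on `CC X`, generated by the subbasis `{□V, ◇V | V clopen}`. -/
instance ccTop : TopologicalSpace ↥(CC X) :=
  generateFrom {S | ∃ V : Set X, IsClopen V ∧ (S = ccBox V ∨ S = ccDia V)}

/-- The order `⊴` on closed chains: `C₁ ⊴ C₂` iff `C₂ ⊆ C₁` and `C₂` is an upset in `C₁`. -/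
def lec (C₁ C₂ : Set X) : Prop :=
  C₂ ⊆ C₁ ∧ ∀ x ∈ C₂, ∀ y ∈ C₁, x ≤ y → y ∈ C₂

/-- `CC_n(X)`: the nonempty (closed) chains of `X` of cardinality at most `n`, with the
subspace topology and order `⊴` induced by `CC(X)`. -/
abbrev CCn (X : Type*) [TopologicalSpace X] [Preorder X] (n : ℕ) : Type _ :=
  {C : ↥(CC X) // (C : Set X).encard ≤ (n : ℕ∞)}

/-- A clopen subset of `S → Bool` depends on finitely many coordinates. -/
lemma clopen_dep {S : Type*} {W : Set (S → Bool)} (hW : IsClopen W) :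
    ∃ T : Set S, T.Finite ∧
      ∀ f ∈ W, ∀ g : S → Bool, (∀ s ∈ T, g s = f s) → g ∈ W := by
  classical
  have hopen := hW.2
  rw [isOpen_pi_iff] at hopen
  choose I u hu hsub using hopen
  set Cyl : (f : S → Bool) → f ∈ W → Set (S → Bool) :=
    fun f hf => {g | ∀ s ∈ I f hf, g s = f s} with hCyl
  have hCylsub : ∀ (f) (hf : f ∈ W), Cyl f hf ⊆ W := by
    intro f hf g hg
    apply hsub f hf
    intro s hs
    simp only [Finset.coe_mem] at *
    have := (hu f hf s hs).2
    have hg' := hg s hs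
    simpa [hg'] using this
  have hCylopen : ∀ (f) (hf : f ∈ W), IsOpen (Cyl f hf) := by
    intro f hf
    have : Cyl f hf = ⋂ s ∈ I f hf, (fun g : S → Bool => g s) ⁻¹' {f s} := by
      ext g; simp [hCyl]
    rw [this]
    exact isOpen_biInter_finset fun s _ =>
      (continuous_apply s).isOpen_preimage _ (isOpen_discrete _)
  have hcov : W ⊆ ⋃ w : W, Cyl w.1 w.2 := by
    intro f hf
    exact mem_iUnion.2 ⟨⟨f, hf⟩, fun s _ => rfl⟩
  obtain ⟨t, ht⟩ := (hW.1.isCompact).elim_finite_subcover (fun w : W => Cyl w.1 w.2)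
    (fun w => hCylopen w.1 w.2) hcov
  refine ⟨⋃ w ∈ t, (I w.1 w.2 : Set S),
    t.finite_toSet.biUnion (fun w _ => (I w.1 w.2).finite_toSet), ?_⟩
  intro f hf g hg
  obtain ⟨w, hwt, hfw⟩ : ∃ w ∈ t, f ∈ Cyl w.1 w.2 := by
    have := ht hf
    simpa using this
  apply hCylsub w.1 w.2
  intro s hs
  have h1 : f s = w.1 s := hfw s hs
  have h2 : g s = f s := hg s (mem_biUnion hwt (by simpa using hs))
  rw [h2, h1]

/-- A finite nonempty chain in a partial order has a least element. -/
lemma chain_min {α : Type*} [PartialOrder α] {C : Set α} (hfin : C.Finite)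
    (hne : C.Nonempty) (hch : IsChain (· ≤ ·) C) : ∃ m ∈ C, ∀ x ∈ C, m ≤ x := by
  obtain ⟨m, hm, hmin'⟩ := Set.Finite.exists_minimalFor id C hfin hne
  have hmin : ∀ x ∈ C, x ≤ m → m = x := fun x hx h => le_antisymm (hmin' hx h) h
  refine ⟨m, hm, fun x hx => ?_⟩
  rcases eq_or_ne m x with rfl | hne'
  · exact le_rfl
  · rcases hch hm hx hne' with h | h
    · exact h
    · exact le_of_eq (hmin x hx h)

/-- For `S` infinite and `n ≥ 2`, `CC_n(2^S)` is not a co-Esakia space: some clopen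
subset has a non-clopen `⊴`-upset. -/
theorem stmt17 (S : Type*) [Infinite S] (n : ℕ) (hn : 2 ≤ n) :
    ∃ 𝒱 : Set (CCn (S → Bool) n), IsClopen 𝒱 ∧
      ¬ IsClopen {C : CCn (S → Bool) n |
          ∃ K ∈ 𝒱, lec ((K : ↥(CC (S → Bool))) : Set (S → Bool))
            ((C : ↥(CC (S → Bool))) : Set (S → Bool))} := by
  classical
  obtain ⟨s₀⟩ : Nonempty S := inferInstance
  set V : Set (S → Bool) := {f | f s₀ = true} with hVdef
  have hVclopen : IsClopen V := by
    have : V = (fun f : S → Bool => f s₀) ⁻¹' {true} := by ext f; simp [hVdef]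
    rw [this]
    exact (isClopen_discrete _).preimage (continuous_apply s₀)
  -- the subbasis
  set sb : Set (Set ↥(CC (S → Bool))) :=
    {T | ∃ W : Set (S → Bool), IsClopen W ∧ (T = ccBox W ∨ T = ccDia W)} with hsbdef
  have hdia_clopen : IsClopen (ccDia Vᶜ : Set ↥(CC (S → Bool))) := by
    constructor
    · rw [← isOpen_compl_iff]
      have hcompl : (ccDia Vᶜ)ᶜ = ccBox V := by
        ext C
        simp only [ccDia, ccBox, mem_compl_iff, mem_setOf_eq,
          Set.not_nonempty_iff_eq_empty]
        rw [← Set.disjoint_iff_inter_eq_empty, Set.disjoint_compl_right_iff_subset]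
      rw [hcompl]
      exact isOpen_generateFrom_of_mem ⟨V, hVclopen, Or.inl rfl⟩
    · exact isOpen_generateFrom_of_mem ⟨Vᶜ, hVclopen.compl, Or.inr rfl⟩
  set 𝒱 : Set (CCn (S → Bool) n) := Subtype.val ⁻¹' (ccDia Vᶜ) with h𝒱def
  have h𝒱clopen : IsClopen 𝒱 := hdia_clopen.preimage continuous_subtype_val
  set Small : Set (CCn (S → Bool) n) :=
    {C | ((C : ↥(CC (S → Bool))) : Set (S → Bool)).encard < (n : ℕ∞)} with hSmalldef
  set E : Set (CCn (S → Bool) n) := 𝒱 ∪ Small with hEdef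
  -- characterization of the upset
  have hupset : {C : CCn (S → Bool) n |
      ∃ K ∈ 𝒱, lec ((K : ↥(CC (S → Bool))) : Set (S → Bool))
        ((C : ↥(CC (S → Bool))) : Set (S → Bool))} = E := by
    ext C
    simp only [mem_setOf_eq, hEdef, mem_union]
    constructor
    · rintro ⟨K, hK𝒱, hsub, -⟩
      by_cases hCV : ((C : ↥(CC (S → Bool))) : Set (S → Bool)) ⊆ V
      · right
        obtain ⟨k, hkK, hkV⟩ : (((K : ↥(CC (S → Bool))) : Set (S → Bool)) ∩ Vᶜ).Nonempty := hK𝒱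
        have hKfin : ((K : ↥(CC (S → Bool))) : Set (S → Bool)).Finite :=
          Set.encard_lt_top_iff.mp (lt_of_le_of_lt K.2 (by simp))
        have hss : ((C : ↥(CC (S → Bool))) : Set (S → Bool)) ⊂
            ((K : ↥(CC (S → Bool))) : Set (S → Bool)) := by
          refine ⟨hsub, fun hKC => ?_⟩
          exact hkV (hCV (hKC hkK))
        exact lt_of_lt_of_le (Set.Finite.encard_lt_encard (hKfin.subset hsub) hss) K.2
      · left
        exact Set.inter_compl_nonempty_iff.mpr hCV
    · rintro (hC | hC)
      · exact ⟨C, hC, subset_rfl, fun x hx y hy _ => hy⟩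
      · by_cases hCV : ((C : ↥(CC (S → Bool))) : Set (S → Bool)) ⊆ V
        · -- extend C downwards with a point outside V
          set D : Set (S → Bool) := ((C : ↥(CC (S → Bool))) : Set (S → Bool)) with hDdef
          obtain ⟨hDne, hDcl, hDch⟩ := (C : ↥(CC (S → Bool))).2
          have hDfin : D.Finite := Set.encard_lt_top_iff.mp (lt_of_le_of_lt C.2 (by simp))
          obtain ⟨m, hmD, hmmin⟩ := chain_min hDfin hDne hDch
          set x₀ : S → Bool := fun s => if s = s₀ then false else m s with hx₀def
          have hx₀m : x₀ ≤ m := by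
            intro s
            by_cases hs : s = s₀ <;> simp [hx₀def, hs]
          have hx₀s₀ : x₀ s₀ = false := by simp [hx₀def]
          have hx₀V : x₀ ∉ V := by simp [hVdef, hx₀s₀]
          have hx₀D : x₀ ∉ D := fun h => hx₀V (hCV h)
          set K : Set (S → Bool) := insert x₀ D with hKdef
          have hKch : IsChain (· ≤ ·) K :=
            hDch.insert fun b hb _ => Or.inl (le_trans hx₀m (hmmin b hb))
          have hKcl : IsClosed K := (hDfin.insert x₀).isClosed
          have hKcc : K ∈ CC (S → Bool) := ⟨⟨x₀, mem_insert _ _⟩, hKcl, hKch⟩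
          have hKcard : K.encard ≤ (n : ℕ∞) := by
            rw [hKdef, Set.encard_insert_of_notMem hx₀D]
            exact (ENat.add_one_le_iff (Set.encard_ne_top_iff.mpr hDfin)).mpr hC
          refine ⟨⟨⟨K, hKcc⟩, hKcard⟩, ⟨x₀, mem_insert _ _, hx₀V⟩, subset_insert _ _, ?_⟩
          intro x hx y hy hxy
          rcases hy with rfl | hy
          · exfalso
            have h1 : x s₀ ≤ x₀ s₀ := hxy s₀
            rw [hx₀s₀] at h1
            have h2 : x s₀ = true := hCV hx
            rw [h2] at h1
            exact absurd h1 (by simp)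
          · exact hy
        · exact ⟨C, Set.inter_compl_nonempty_iff.mpr hCV, subset_rfl,
            fun x hx y hy _ => hy⟩
  -- E is closed
  have hEclosed : IsClosed E := by
    rw [← isOpen_compl_iff, isOpen_iff_forall_mem_open]
    intro C₀ hC₀
    have hC₀V : ((C₀ : ↥(CC (S → Bool))) : Set (S → Bool)) ⊆ V := by
      by_contra h
      exact hC₀ (Or.inl (Set.inter_compl_nonempty_iff.mpr h))
    have hC₀card : (n : ℕ∞) ≤ ((C₀ : ↥(CC (S → Bool))) : Set (S → Bool)).encard :=
      not_lt.mp (fun h => hC₀ (Or.inr h))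
    set D : Set (S → Bool) := ((C₀ : ↥(CC (S → Bool))) : Set (S → Bool)) with hDdef
    have hDfin : D.Finite := Set.encard_lt_top_iff.mp (lt_of_le_of_lt C₀.2 (by simp))
    set sep : (S → Bool) → (S → Bool) → S := fun x y =>
      if h : ∃ s, x s ≠ y s then h.choose else s₀ with hsepdef
    have hsep : ∀ x y : S → Bool, x ≠ y → x (sep x y) ≠ y (sep x y) := by
      intro x y hxy
      have h : ∃ s, x s ≠ y s := Function.ne_iff.mp hxy
      simp only [hsepdef, dif_pos h]
      exact h.choose_spec
    set T : Set S := insert s₀ ((fun p : (S → Bool) × (S → Bool) => sep p.1 p.2) ''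
      (D ×ˢ D)) with hTdef
    have hTfin : T.Finite := ((hDfin.prod hDfin).image _).insert s₀
    have hsepT : ∀ x ∈ D, ∀ y ∈ D, sep x y ∈ T := fun x hx y hy =>
      mem_insert_of_mem _ (mem_image_of_mem _ (mk_mem_prod hx hy))
    set U : (S → Bool) → Set (S → Bool) := fun x => {g | ∀ s ∈ T, g s = x s} with hUdef
    have hUclopen : ∀ x, IsClopen (U x) := by
      intro x
      have : U x = ⋂ s ∈ T, (fun g : S → Bool => g s) ⁻¹' {x s} := by
        ext g; simp [hUdef]
      rw [this]
      exact hTfin.isClopen_biInter fun s _ =>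
        (isClopen_discrete _).preimage (continuous_apply s)
    have hUself : ∀ x, x ∈ U x := fun x s _ => rfl
    have hUV : ∀ x ∈ D, U x ⊆ V := by
      intro x hx g hg
      have h1 : g s₀ = x s₀ := hg s₀ (mem_insert _ _)
      have h2 : x s₀ = true := hC₀V hx
      show g s₀ = true
      rw [h1, h2]
    have hUdisj : ∀ x ∈ D, ∀ y ∈ D, x ≠ y → ∀ z, z ∈ U x → z ∈ U y → False := by
      intro x hx y hy hxy z hzx hzy
      have h1 : z (sep x y) = x (sep x y) := hzx _ (hsepT x hx y hy)
      have h2 : z (sep x y) = y (sep x y) := hzy _ (hsepT x hx y hy)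
      exact hsep x y hxy (h1 ▸ h2)
    set Wu : Set (S → Bool) := ⋃ x ∈ D, U x with hWudef
    have hWuclopen : IsClopen Wu := hDfin.isClopen_biUnion fun x _ => hUclopen x
    set N : Set ↥(CC (S → Bool)) := ccBox Wu ∩ ⋂ x ∈ D, ccDia (U x) with hNdef
    have hNopen : IsOpen N := by
      refine IsOpen.inter ?_ (hDfin.isOpen_biInter fun x hx => ?_)
      · exact isOpen_generateFrom_of_mem ⟨Wu, hWuclopen, Or.inl rfl⟩
      · exact isOpen_generateFrom_of_mem ⟨U x, hUclopen x, Or.inr rfl⟩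
    refine ⟨Subtype.val ⁻¹' N, ?_, hNopen.preimage continuous_subtype_val, ?_⟩
    · -- the neighborhood is inside Eᶜ
      intro C hC
      have hCbox : ((C : ↥(CC (S → Bool))) : Set (S → Bool)) ⊆ Wu := hC.1
      have hCdia : ∀ x ∈ D, (((C : ↥(CC (S → Bool))) : Set (S → Bool)) ∩ U x).Nonempty := by
        intro x hx
        have := hC.2
        simp only [mem_iInter] at this
        exact this x hx
      intro hCE
      rcases hCE with hC𝒱 | hCsmall
      · obtain ⟨z, hz1, hz2⟩ := hC𝒱
        obtain ⟨x, hx, hzU⟩ := mem_iUnion₂.mp (hCbox hz1)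
        exact hz2 (hUV x hx hzU)
      · have hch : ∀ x, ∃ z, x ∈ D → z ∈ ((C : ↥(CC (S → Bool))) : Set (S → Bool)) ∩ U x := by
          intro x
          by_cases hx : x ∈ D
          · exact (hCdia x hx).imp fun z hz _ => hz
          · exact ⟨fun _ => true, fun h => absurd h hx⟩
        choose c hc using hch
        have hinj : Set.InjOn c D := by
          intro x hx y hy hcxy
          by_contra hxy
          exact hUdisj x hx y hy hxy (c x) ((hc x hx).2) (hcxy ▸ (hc y hy).2)
        have h1 : (c '' D).encard = D.encard := hinj.encard_image
        have h2 : c '' D ⊆ ((C : ↥(CC (S → Bool))) : Set (S → Bool)) := by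
          rintro _ ⟨x, hx, rfl⟩
          exact (hc x hx).1
        have : (n : ℕ∞) ≤ ((C : ↥(CC (S → Bool))) : Set (S → Bool)).encard :=
          le_trans hC₀card (h1 ▸ Set.encard_mono h2)
        exact absurd hCsmall (not_lt.mpr this)
    · -- C₀ is in the neighborhood
      refine ⟨fun x hx => mem_biUnion hx (hUself x), ?_⟩
      simp only [mem_iInter]
      exact fun x hx => ⟨x, hx, hUself x⟩
  -- E is not open
  have hEnotopen : ¬ IsOpen E := by
    intro hO
    obtain ⟨O, hOopen, hOpre⟩ := isOpen_induced_iff.mp hO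
    set g : S → Bool := fun _ => true with hgdef
    have hgCC : ({g} : Set (S → Bool)) ∈ CC (S → Bool) :=
      ⟨singleton_nonempty g, isClosed_singleton, (by intro x hx y hy hxy; exact absurd ((hx : x = g).trans (hy : y = g).symm) hxy)⟩
    have h1n : (1 : ℕ∞) < (n : ℕ∞) := by exact_mod_cast (by omega : (1:ℕ) < n)
    set C₁ : CCn (S → Bool) n := ⟨⟨{g}, hgCC⟩, by
      rw [Set.encard_singleton]; exact le_of_lt h1n⟩ with hC₁def
    have hC₁E : C₁ ∈ E := Or.inr (by
      show ({g} : Set (S → Bool)).encard < (n : ℕ∞)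
      rw [Set.encard_singleton]; exact h1n)
    have hC₁O : (C₁ : ↥(CC (S → Bool))) ∈ O := by
      rw [← hOpre] at hC₁E; exact hC₁E
    have hbasis := isTopologicalBasis_of_subbasis
      (rfl : (ccTop : TopologicalSpace ↥(CC (S → Bool))) = generateFrom sb)
    obtain ⟨v, hv, hC₁v, hvO⟩ := hbasis.exists_subset_of_mem_open hC₁O hOopen
    obtain ⟨F, ⟨hFfin, hFsub⟩, rfl⟩ := hv
    choose! Wf hWclop hWform using fun w (hw : w ∈ F) => hFsub hw
    choose! Tf hTfin hTdep using fun w (hw : w ∈ F) => clopen_dep (hWclop w hw)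
    set T : Set S := insert s₀ (⋃ w ∈ F, Tf w) with hTdef
    have hTfin' : T.Finite := (hFfin.biUnion fun w hw => hTfin w hw).insert s₀
    haveI := hTfin'.infinite_compl.to_subtype
    set e : ℕ ↪ ↥(Tᶜ) := Infinite.natEmbedding ↥(Tᶜ) with hedef
    set tfun : Fin n → S := fun j => (e (j : ℕ)).1 with htfundef
    have htinj : Function.Injective tfun := by
      intro a b h
      exact Fin.ext (e.injective (Subtype.val_injective h))
    have htT : ∀ j, tfun j ∉ T := fun j => (e (j : ℕ)).2
    set y : Fin n → (S → Bool) := fun k s =>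
      if (∀ j : Fin n, tfun j = s → j < k) then true else false with hydef
    have hyoff : ∀ (k : Fin n) (s : S), s ∉ Set.range tfun → y k s = true := by
      intro k s hs
      rw [hydef]
      exact if_pos fun j hj => absurd ⟨j, hj⟩ hs
    have hyt : ∀ k j : Fin n, y k (tfun j) = if j < k then true else false := by
      intro k j
      by_cases h : j < k
      · rw [if_pos h, hydef]
        refine if_pos fun j' hj' => ?_
        rwa [htinj hj']
      · rw [if_neg h, hydef]
        exact if_neg fun hall => h (hall j rfl)
    have hmono : ∀ k k' : Fin n, k ≤ k' → y k ≤ y k' := by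
      intro k k' hkk' s
      simp only [hydef]
      split_ifs with h1 h2
      · exact le_rfl
      · exact absurd (fun j hj => lt_of_lt_of_le (h1 j hj) hkk') h2
      · exact Bool.false_le _
      · exact le_rfl
    have hyinj : Function.Injective y := by
      have hne : ∀ k k' : Fin n, k < k' → y k ≠ y k' := by
        intro k k' h hEq
        have h2 := congrFun hEq (tfun k)
        rw [hyt, hyt, if_neg (lt_irrefl k), if_pos h] at h2
        exact Bool.noConfusion h2
      intro k k' h
      by_contra hkk
      rcases lt_or_gt_of_ne hkk with hlt | hlt
      · exact hne _ _ hlt h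
      · exact hne _ _ hlt h.symm
    have hychain : IsChain (· ≤ ·) (Set.range y) := by
      rintro _ ⟨k, rfl⟩ _ ⟨k', rfl⟩ _
      rcases le_total k k' with h | h
      · exact Or.inl (hmono k k' h)
      · exact Or.inr (hmono k' k h)
    have hs₀nt : s₀ ∉ Set.range tfun := by
      rintro ⟨j, hj⟩
      exact htT j (hj.symm ▸ mem_insert s₀ _)
    have hyV : Set.range y ⊆ V := by
      rintro _ ⟨k, rfl⟩
      exact hyoff k s₀ hs₀nt
    haveI : Nonempty (Fin n) := ⟨⟨0, by omega⟩⟩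
    have hyCC : Set.range y ∈ CC (S → Bool) :=
      ⟨range_nonempty y, (Set.finite_range y).isClosed, hychain⟩
    have hycard : (Set.range y).encard = (n : ℕ∞) := by
      rw [← Set.image_univ, (hyinj.injOn).encard_image, Set.encard_univ]
      simp
    set Cn : CCn (S → Bool) n := ⟨⟨Set.range y, hyCC⟩, le_of_eq hycard⟩ with hCndef
    have hgw : ∀ w ∈ F, g ∈ Wf w := by
      intro w hw
      have h1 : (C₁ : ↥(CC (S → Bool))) ∈ w := mem_sInter.mp hC₁v w hw
      rcases hWform w hw with h | h
      · rw [h] at h1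
        exact h1 rfl
      · rw [h] at h1
        obtain ⟨z, hz1, hz2⟩ := h1
        have : z = g := hz1
        rwa [← this]
    have hyW : ∀ w ∈ F, ∀ k : Fin n, y k ∈ Wf w := by
      intro w hw k
      refine hTdep w hw g (hgw w hw) (y k) ?_
      intro s hs
      have hsT : s ∈ T := mem_insert_of_mem _ (mem_biUnion hw hs)
      have hsnt : s ∉ Set.range tfun := by
        rintro ⟨j, hj⟩
        exact htT j (hj.symm ▸ hsT)
      exact hyoff k s hsnt
    have hCnv : (Cn : ↥(CC (S → Bool))) ∈ ⋂₀ F := by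
      rw [mem_sInter]
      intro w hw
      rcases hWform w hw with h | h
      · rw [h]
        rintro _ ⟨k, rfl⟩
        exact hyW w hw k
      · rw [h]
        exact ⟨y (Classical.arbitrary (Fin n)), mem_range_self _, hyW w hw _⟩
    have hCnE : Cn ∈ E := by
      rw [← hOpre]
      exact hvO hCnv
    rcases hCnE with h | h
    · obtain ⟨z, hz1, hz2⟩ := h
      exact hz2 (hyV hz1)
    · have : (Set.range y).encard < (n : ℕ∞) := h
      rw [hycard] at this
      exact lt_irrefl _ this
  refine ⟨𝒱, h𝒱clopen, ?_⟩
  rw [hupset]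
  intro h
  exact hEnotopen h.2
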